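/- For positive semidefinite matrices a, b ∈ Mₙ(ℂ), the following are equivalent: (1) λ_i(a) ≤ λ_i(b) for all i = 1,...,n (eigenvalues in decreasing order); (2) there exists a contraction c ∈ Mₙ(ℂ) (i.e., ‖c‖ ≤ 1 in operator norm) such that a = c b c*. -/

import Mathlib

open Matrix BigOperators Finset
open scoped ComplexOrder

/-- The `i`-th largest eigenvalue (0-indexed) of a Hermitian matrix. -/
noncomputable def eigDesc {n : ℕ} (a : Matrix (Fin n) (Fin n) ℂ) (ha : a.IsHermitian) (i : Fin n) : ℝ :=
  ha.eigenvalues (Tuple.sort ha.eigenvalues i.rev)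

/-- Eigenvalues in decreasing order, extended by `0` beyond the size. `eigN a ha i = λ_{i+1}(a)`. -/
noncomputable def eigN {n : ℕ} (a : Matrix (Fin n) (Fin n) ℂ) (ha : a.IsHermitian) (i : ℕ) : ℝ :=
  if h : i < n then eigDesc a ha ⟨i, h⟩ else 0

/-- The non-linear trace of Choquet type:
`φ_α(a) = ∑_{i=1}^{n-1} (λ_i(a) - λ_{i+1}(a)) α(i) + λ_n(a) α(n)`. -/
noncomputable def choquetTrace {n : ℕ} (α : ℕ → ℝ) (a : Matrix (Fin n) (Fin n) ℂ)
    (ha : a.IsHermitian) : ℝ :=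
  ∑ i ∈ Finset.range n, (eigN a ha i - eigN a ha (i + 1)) * α (i + 1)

/-- Functional calculus of a Hermitian matrix `a` by a function `f : ℝ → ℝ` on its eigenvalues. -/
noncomputable def funCalc {n : ℕ} (f : ℝ → ℝ) (a : Matrix (Fin n) (Fin n) ℂ)
    (ha : a.IsHermitian) : Matrix (Fin n) (Fin n) ℂ :=
  (ha.eigenvectorUnitary : Matrix (Fin n) (Fin n) ℂ) *
    Matrix.diagonal (fun i => (f (ha.eigenvalues i) : ℂ)) *
    star (ha.eigenvectorUnitary : Matrix (Fin n) (Fin n) ℂ)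

/-- The absolute value `|a| = (a^* a)^{1/2}` of a matrix. -/
noncomputable def matAbs {n : ℕ} (a : Matrix (Fin n) (Fin n) ℂ) : Matrix (Fin n) (Fin n) ℂ :=
  ((Matrix.posSemidef_conjTranspose_mul_self a).1.eigenvectorUnitary : Matrix (Fin n) (Fin n) ℂ) *
    Matrix.diagonal ((↑) ∘ Real.sqrt ∘ (Matrix.posSemidef_conjTranspose_mul_self a).1.eigenvalues) *
    star ((Matrix.posSemidef_conjTranspose_mul_self a).1.eigenvectorUnitary : Matrix (Fin n) (Fin n) ℂ)

theorem matAbs_isHermitian {n : ℕ} (a : Matrix (Fin n) (Fin n) ℂ) : (matAbs a).IsHermitian :=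
  by
  unfold matAbs
  rw [Matrix.star_eq_conjTranspose]
  exact Matrix.isHermitian_mul_mul_conjTranspose _
    (Matrix.isHermitian_diagonal_of_self_adjoint _ (by ext i; simp))

variable {n : ℕ}

lemma eigvec_apply {m : Matrix (Fin n) (Fin n) ℂ} (hm : m.IsHermitian) (j : Fin n) :
    Matrix.toEuclideanCLM (𝕜 := ℂ) m (hm.eigenvectorBasis j)
      = (hm.eigenvalues j : ℂ) • hm.eigenvectorBasis j := by
  apply (WithLp.equiv 2 (Fin n → ℂ)).injective
  show (Matrix.toLin' m) ((WithLp.equiv 2 (Fin n → ℂ)) (hm.eigenvectorBasis j)) = _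
  have h1 := hm.mulVec_eigenvectorBasis j
  simp only [Matrix.toLin'_apply]
  rw [show (WithLp.equiv 2 (Fin n → ℂ)) (hm.eigenvectorBasis j) = ⇑(hm.eigenvectorBasis j) from rfl]
  rw [h1]
  ext k
  simp [Complex.real_smul]

lemma qf_expand {m : Matrix (Fin n) (Fin n) ℂ} (hm : m.IsHermitian)
    (x : EuclideanSpace ℂ (Fin n)) :
    (inner ℂ x (Matrix.toEuclideanCLM (𝕜 := ℂ) m x) : ℂ) =
      ∑ j, ((hm.eigenvalues j * ‖hm.eigenvectorBasis.repr x j‖ ^ 2 : ℝ) : ℂ) := by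
  set e := hm.eigenvectorBasis with he
  have hTx : Matrix.toEuclideanCLM (𝕜 := ℂ) m x
      = ∑ j, (e.repr x j * (hm.eigenvalues j : ℂ)) • e j := by
    conv_lhs => rw [← e.sum_repr x]
    rw [map_sum]
    refine Finset.sum_congr rfl fun j _ => ?_
    rw [_root_.map_smul, eigvec_apply hm j, smul_smul]
  rw [hTx, inner_sum]
  refine Finset.sum_congr rfl fun j _ => ?_
  rw [inner_smul_right]
  have h2 : (inner ℂ x (e j) : ℂ) = starRingEnd ℂ (e.repr x j) := by
    rw [← inner_conj_symm, e.repr_apply_apply]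
  rw [h2]
  have h3 : e.repr x j * starRingEnd ℂ (e.repr x j) = ((‖e.repr x j‖ ^ 2 : ℝ) : ℂ) := by
    rw [Complex.mul_conj']
    push_cast
    ring
  rw [mul_comm (e.repr x j) _, mul_assoc, h3]
  push_cast
  ring

lemma parseval (e : OrthonormalBasis (Fin n) ℂ (EuclideanSpace ℂ (Fin n)))
    (x : EuclideanSpace ℂ (Fin n)) : ‖x‖ ^ 2 = ∑ j, ‖e.repr x j‖ ^ 2 := by
  have h1 : ‖x‖ = ‖e.repr x‖ := (e.repr.norm_map x).symm
  rw [h1, EuclideanSpace.norm_eq, Real.sq_sqrt]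
  positivity

lemma repr_eq_zero_of_mem_span (e : OrthonormalBasis (Fin n) ℂ (EuclideanSpace ℂ (Fin n)))
    (s : Finset (Fin n)) {x : EuclideanSpace ℂ (Fin n)}
    (hx : x ∈ Submodule.span ℂ (⇑e '' ↑s)) {j : Fin n} (hj : j ∉ s) : e.repr x j = 0 := by
  have hx' : x ∈ Submodule.span ℂ (⇑e.toBasis '' ↑s) := by rwa [e.coe_toBasis]
  have hsupp := (e.toBasis.mem_span_image).1 hx'
  have : e.toBasis.repr x j = 0 := by
    by_contra hne
    exact hj (hsupp (Finsupp.mem_support_iff.2 hne))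
  rwa [e.coe_toBasis_repr_apply] at this

lemma qf_le {m : Matrix (Fin n) (Fin n) ℂ} (hm : m.IsHermitian) (s : Finset (Fin n)) (μ : ℝ)
    (hμ : ∀ j ∈ s, hm.eigenvalues j ≤ μ) {x : EuclideanSpace ℂ (Fin n)}
    (hx : x ∈ Submodule.span ℂ (⇑hm.eigenvectorBasis '' ↑s)) :
    Complex.re (inner ℂ x (Matrix.toEuclideanCLM (𝕜 := ℂ) m x) : ℂ) ≤ μ * ‖x‖ ^ 2 := by
  rw [qf_expand hm x]
  have : Complex.re (∑ j, ((hm.eigenvalues j * ‖hm.eigenvectorBasis.repr x j‖ ^ 2 : ℝ) : ℂ))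
      = ∑ j, hm.eigenvalues j * ‖hm.eigenvectorBasis.repr x j‖ ^ 2 := by
    rw [← Complex.ofReal_sum, Complex.ofReal_re]
  rw [this, parseval hm.eigenvectorBasis x, Finset.mul_sum]
  refine Finset.sum_le_sum fun j _ => ?_
  by_cases hj : j ∈ s
  · exact mul_le_mul_of_nonneg_right (hμ j hj) (by positivity)
  · rw [repr_eq_zero_of_mem_span hm.eigenvectorBasis s hx hj]
    simp

lemma qf_ge {m : Matrix (Fin n) (Fin n) ℂ} (hm : m.IsHermitian) (s : Finset (Fin n)) (μ : ℝ)
    (hμ : ∀ j ∈ s, μ ≤ hm.eigenvalues j) {x : EuclideanSpace ℂ (Fin n)}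
    (hx : x ∈ Submodule.span ℂ (⇑hm.eigenvectorBasis '' ↑s)) :
    μ * ‖x‖ ^ 2 ≤ Complex.re (inner ℂ x (Matrix.toEuclideanCLM (𝕜 := ℂ) m x) : ℂ) := by
  rw [qf_expand hm x]
  have : Complex.re (∑ j, ((hm.eigenvalues j * ‖hm.eigenvectorBasis.repr x j‖ ^ 2 : ℝ) : ℂ))
      = ∑ j, hm.eigenvalues j * ‖hm.eigenvectorBasis.repr x j‖ ^ 2 := by
    rw [← Complex.ofReal_sum, Complex.ofReal_re]
  rw [this, parseval hm.eigenvectorBasis x, Finset.mul_sum]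
  refine Finset.sum_le_sum fun j _ => ?_
  by_cases hj : j ∈ s
  · exact mul_le_mul_of_nonneg_right (hμ j hj) (by positivity)
  · rw [repr_eq_zero_of_mem_span hm.eigenvectorBasis s hx hj]
    simp

lemma finrank_le_finrank_comap {V : Type*} [AddCommGroup V] [Module ℂ V]
    [FiniteDimensional ℂ V] (f : V →ₗ[ℂ] V) (W : Submodule ℂ V) :
    Module.finrank ℂ W ≤ Module.finrank ℂ (W.comap f) := by
  have hker : LinearMap.ker f ≤ W.comap f := fun x hx => by
    simp only [Submodule.mem_comap, LinearMap.mem_ker.mp hx]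
    exact W.zero_mem
  have h1 : Module.finrank ℂ (W.comap f)
      = Module.finrank ℂ ((W.comap f).map f) + Module.finrank ℂ (LinearMap.ker f) := by
    have hrn := LinearMap.finrank_range_add_finrank_ker (f.domRestrict (W.comap f))
    rw [LinearMap.range_domRestrict, LinearMap.ker_domRestrict] at hrn
    rw [← hrn]
    congr 1
    exact (Submodule.comapSubtypeEquivOfLe hker).finrank_eq
  have h2 : (W.comap f).map f = LinearMap.range f ⊓ W := Submodule.map_comap_eq f W
  have h3 := Submodule.finrank_sup_add_finrank_inf_eq (LinearMap.range f) W
  have h4 : Module.finrank ℂ ↥(LinearMap.range f ⊔ W) ≤ Module.finrank ℂ V :=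
    Submodule.finrank_le _
  have h5 := LinearMap.finrank_range_add_finrank_ker f
  have h6 : Module.finrank ℂ ↥W ≤ Module.finrank ℂ V := Submodule.finrank_le _
  rw [h1, h2]
  omega

lemma finrank_span_orthonormal (e : OrthonormalBasis (Fin n) ℂ (EuclideanSpace ℂ (Fin n)))
    (s : Finset (Fin n)) :
    Module.finrank ℂ (Submodule.span ℂ (⇑e '' ↑s)) = s.card := by
  have li : LinearIndependent ℂ (fun k : s => e ↑k) :=
    e.orthonormal.linearIndependent.comp _ Subtype.val_injective
  have himg : Set.range (fun k : s => e ↑k) = ⇑e '' ↑s := by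
    ext y
    simp [Set.mem_image, Set.mem_range, Subtype.exists]
  rw [← himg, finrank_span_eq_card li, Fintype.card_coe]


set_option synthInstance.maxHeartbeats 1000000 in
set_option maxHeartbeats 1600000 in
theorem stmt6_bwd (n : ℕ) (a b : Matrix (Fin n) (Fin n) ℂ) (ha : a.PosSemidef) (hb : b.PosSemidef)
    (c : Matrix (Fin n) (Fin n) ℂ) (hc : ‖Matrix.toEuclideanCLM (𝕜 := ℂ) c‖ ≤ 1)
    (habc : a = c * b * star c) (i : Fin n) : eigDesc a ha.1 i ≤ eigDesc b hb.1 i := by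
  classical
  set la := ha.1.eigenvalues with hla
  set lb := hb.1.eigenvalues with hlb
  set sa := Tuple.sort la with hsa
  set sb := Tuple.sort lb with hsb
  set ea := ha.1.eigenvectorBasis with hea
  set eb := hb.1.eigenvectorBasis with heb
  set sA : Finset (Fin n) := (Finset.Iic i).image (fun k => sa k.rev) with hsA
  set sB : Finset (Fin n) := (Finset.Ici i).image (fun k => sb k.rev) with hsB
  have hinj_a : Function.Injective (fun k : Fin n => sa k.rev) :=
    fun x y hxy => Fin.rev_injective (sa.injective hxy)
  have hinj_b : Function.Injective (fun k : Fin n => sb k.rev) :=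
    fun x y hxy => Fin.rev_injective (sb.injective hxy)
  have cardA : sA.card = (i : ℕ) + 1 := by
    rw [hsA, Finset.card_image_of_injective _ hinj_a, Fin.card_Iic]
  have cardB : sB.card = n - (i : ℕ) := by
    rw [hsB, Finset.card_image_of_injective _ hinj_b, Fin.card_Ici]
  set U := Submodule.span ℂ (⇑ea '' ↑sA) with hUdef
  set W := Submodule.span ℂ (⇑eb '' ↑sB) with hWdef
  set Cs := Matrix.toEuclideanCLM (𝕜 := ℂ) (star c) with hCs
  set K := W.comap (Cs : EuclideanSpace ℂ (Fin n) →ₗ[ℂ] EuclideanSpace ℂ (Fin n)) with hK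
  have hUrank : Module.finrank ℂ U = (i : ℕ) + 1 := by
    rw [hUdef, finrank_span_orthonormal, cardA]
  have hWrank : Module.finrank ℂ W = n - (i : ℕ) := by
    rw [hWdef, finrank_span_orthonormal, cardB]
  have hKrank : n - (i : ℕ) ≤ Module.finrank ℂ K := by
    rw [← hWrank]; exact finrank_le_finrank_comap _ _
  have htot : Module.finrank ℂ (EuclideanSpace ℂ (Fin n)) = n := by
    simp [finrank_euclideanSpace]
  have hsum := Submodule.finrank_sup_add_finrank_inf_eq U K
  have hle : Module.finrank ℂ ↥(U ⊔ K) ≤ n := le_trans (Submodule.finrank_le _) (le_of_eq htot)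
  have hpos : 0 < Module.finrank ℂ ↥(U ⊓ K) := by
    have hi : (i : ℕ) < n := i.2
    omega
  have hne : U ⊓ K ≠ ⊥ := by
    intro hbot
    rw [hbot, finrank_bot] at hpos
    omega
  obtain ⟨x, hxUK, hx0⟩ := Submodule.exists_mem_ne_zero_of_ne_bot hne
  have hxU : x ∈ U := hxUK.1
  have hxK : x ∈ K := hxUK.2
  have hvW : Cs x ∈ W := hxK
  -- eigenvalue bounds on the index sets
  have hμA : ∀ j ∈ sA, eigDesc a ha.1 i ≤ la j := by
    intro j hj
    rw [hsA, Finset.mem_image] at hj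
    obtain ⟨k, hk, rfl⟩ := hj
    exact Tuple.monotone_sort la (Fin.rev_le_rev.mpr (Finset.mem_Iic.mp hk))
  have hμB : ∀ j ∈ sB, lb j ≤ eigDesc b hb.1 i := by
    intro j hj
    rw [hsB, Finset.mem_image] at hj
    obtain ⟨k, hk, rfl⟩ := hj
    exact Tuple.monotone_sort lb (Fin.rev_le_rev.mpr (Finset.mem_Ici.mp hk))
  -- the quadratic form identities
  have h1 : eigDesc a ha.1 i * ‖x‖ ^ 2
      ≤ Complex.re (inner ℂ x (Matrix.toEuclideanCLM (𝕜 := ℂ) a x) : ℂ) :=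
    qf_ge ha.1 sA _ hμA hxU
  have hTa : Matrix.toEuclideanCLM (𝕜 := ℂ) a
      = Matrix.toEuclideanCLM (𝕜 := ℂ) c *
        (Matrix.toEuclideanCLM (𝕜 := ℂ) b * Matrix.toEuclideanCLM (𝕜 := ℂ) (star c)) := by
    rw [habc, _root_.map_mul, _root_.map_mul, mul_assoc]
  have hinner : (inner ℂ x (Matrix.toEuclideanCLM (𝕜 := ℂ) a x) : ℂ)
      = inner ℂ (Cs x) (Matrix.toEuclideanCLM (𝕜 := ℂ) b (Cs x)) := by
    rw [hTa, ContinuousLinearMap.mul_apply, ContinuousLinearMap.mul_apply,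
      ← ContinuousLinearMap.adjoint_inner_left, ← ContinuousLinearMap.star_eq_adjoint,
      ← map_star]
  have h2 : Complex.re (inner ℂ (Cs x) (Matrix.toEuclideanCLM (𝕜 := ℂ) b (Cs x)) : ℂ)
      ≤ eigDesc b hb.1 i * ‖Cs x‖ ^ 2 :=
    qf_le hb.1 sB _ hμB hvW
  have hbnn : 0 ≤ eigDesc b hb.1 i := hb.eigenvalues_nonneg _
  have hnorm : ‖Cs x‖ ≤ ‖x‖ := by
    calc ‖Cs x‖ ≤ ‖Cs‖ * ‖x‖ := Cs.le_opNorm x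
      _ ≤ 1 * ‖x‖ := by
          apply mul_le_mul_of_nonneg_right _ (norm_nonneg x)
          rw [hCs, map_star, ContinuousLinearMap.star_eq_adjoint]
          exact le_trans (le_of_eq (ContinuousLinearMap.adjoint.norm_map _)) hc
      _ = ‖x‖ := one_mul _
  have hchain : eigDesc a ha.1 i * ‖x‖ ^ 2 ≤ eigDesc b hb.1 i * ‖x‖ ^ 2 := by
    calc eigDesc a ha.1 i * ‖x‖ ^ 2
        ≤ Complex.re (inner ℂ x (Matrix.toEuclideanCLM (𝕜 := ℂ) a x) : ℂ) := h1
      _ = Complex.re (inner ℂ (Cs x) (Matrix.toEuclideanCLM (𝕜 := ℂ) b (Cs x)) : ℂ) := by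
          rw [hinner]
      _ ≤ eigDesc b hb.1 i * ‖Cs x‖ ^ 2 := h2
      _ ≤ eigDesc b hb.1 i * ‖x‖ ^ 2 := by
          apply mul_le_mul_of_nonneg_left _ hbnn
          exact pow_le_pow_left₀ (norm_nonneg _) hnorm 2
  have hx2 : (0:ℝ) < ‖x‖ ^ 2 := by
    have : ‖x‖ ≠ 0 := fun h => hx0 (norm_eq_zero.mp h)
    positivity
  exact (mul_le_mul_iff_left₀ hx2).mp hchain

theorem perm_diag_sandwich {n : ℕ} (e : Equiv.Perm (Fin n)) (d g : Fin n → ℂ) :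
    ((diagonal d).submatrix id ⇑e) * diagonal g * ((diagonal d).submatrix id ⇑e)ᴴ
      = diagonal (fun j => d j * g (e.symm j) * star (d j)) := by
  ext j k
  rw [Matrix.mul_apply]
  simp only [Matrix.mul_diagonal, conjTranspose_submatrix, diagonal_conjTranspose,
    submatrix_apply, diagonal_apply, id_eq, Pi.star_apply, Function.comp]
  rw [Finset.sum_eq_single (e.symm j)]
  · simp only [Equiv.apply_symm_apply]
    rcases eq_or_ne j k with rfl | h
    · simp
    · simp [h]
  · intro b _ hb
    have : j ≠ e b := fun h => hb (by simp [h])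
    simp [this]
  · simp

open scoped Matrix.Norms.L2Operator in
theorem stmt6_fwd (n : ℕ) (hn : 0 < n) (a b : Matrix (Fin n) (Fin n) ℂ)
    (ha : a.PosSemidef) (hb : b.PosSemidef)
    (h : ∀ i : Fin n, eigDesc a ha.1 i ≤ eigDesc b hb.1 i) :
    ∃ c : Matrix (Fin n) (Fin n) ℂ,
        ‖Matrix.toEuclideanCLM (𝕜 := ℂ) c‖ ≤ 1 ∧ a = c * b * star c := by
  haveI : Nontrivial (Matrix (Fin n) (Fin n) ℂ) := by
    refine ⟨0, 1, fun h01 => ?_⟩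
    have := congrFun (congrFun h01 ⟨0, hn⟩) ⟨0, hn⟩
    simp at this
  set la := ha.1.eigenvalues with hla
  set lb := hb.1.eigenvalues with hlb
  set π : Equiv.Perm (Fin n) := ((Tuple.sort la)⁻¹ : Equiv.Perm (Fin n)).trans (Tuple.sort lb) with hπ
  have key : ∀ j, la j ≤ lb (π j) := by
    intro j
    have := h (((Tuple.sort la)⁻¹ j).rev)
    simp only [eigDesc, Fin.rev_rev, ← hla, ← hlb] at this
    simpa [hπ, Equiv.Perm.inv_def] using this
  have hbnn : ∀ j, 0 ≤ lb j := fun j => hb.eigenvalues_nonneg j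
  have hann : ∀ j, 0 ≤ la j := fun j => ha.eigenvalues_nonneg j
  set d : Fin n → ℝ := fun j => Real.sqrt (la j / lb (π j)) with hd
  have dnn : ∀ j, 0 ≤ d j := fun j => Real.sqrt_nonneg _
  have dle : ∀ j, d j ≤ 1 := by
    intro j
    show Real.sqrt (la j / lb (π j)) ≤ 1
    rw [show (1:ℝ) = Real.sqrt 1 by simp]
    apply Real.sqrt_le_sqrt
    rcases (hbnn (π j)).lt_or_eq with hpos | hzero
    · exact le_trans (div_le_one_of_le₀ (key j) (le_of_lt hpos)) le_rfl
    · rw [← hzero, div_zero]; exact zero_le_one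
  have dsq : ∀ j, ((d j : ℂ) * (lb (π j) : ℂ) * star (d j : ℂ)) = (la j : ℂ) := by
    intro j
    have hs : star ((d j : ℝ) : ℂ) = ((d j : ℝ) : ℂ) := by
      simp [Complex.star_def, Complex.conj_ofReal]
    rw [hs]
    rcases (hbnn (π j)).lt_or_eq with hpos | hzero
    · have h2 : d j * d j = la j / lb (π j) := by
        show Real.sqrt _ * Real.sqrt _ = _
        exact Real.mul_self_sqrt (div_nonneg (hann j) (hbnn _))
      have hr : (d j) * (lb (π j)) * (d j) = la j := by
        calc (d j) * (lb (π j)) * (d j) = (d j * d j) * lb (π j) := by ring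
        _ = la j := by rw [h2]; exact div_mul_cancel₀ _ hpos.ne'
      rw [← hr]; push_cast; ring
    · have h0 : la j = 0 := le_antisymm (hzero ▸ key j) (hann j)
      have hd0 : d j = 0 := by
        show Real.sqrt _ = 0
        rw [h0, zero_div, Real.sqrt_zero]
      rw [h0, hd0]
      push_cast; ring
  set E : Matrix (Fin n) (Fin n) ℂ :=
    (diagonal (fun j => (d j : ℂ))).submatrix id ⇑(π.symm : Equiv.Perm (Fin n)) with hE
  set Ua := ha.1.eigenvectorUnitary with hUa
  set Ub := hb.1.eigenvectorUnitary with hUb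
  refine ⟨(Ua : Matrix (Fin n) (Fin n) ℂ) * E * star (Ub : Matrix (Fin n) (Fin n) ℂ), ?_, ?_⟩
  · rw [← Matrix.cstar_norm_def]
    have hUa1 : ‖(Ua : Matrix (Fin n) (Fin n) ℂ)‖ = 1 :=
      CStarRing.norm_of_mem_unitary Ua.2
    have hUb1 : ‖star (Ub : Matrix (Fin n) (Fin n) ℂ)‖ = 1 :=
      CStarRing.norm_of_mem_unitary (Unitary.star_mem Ub.2)
    have hE1 : ‖E‖ ≤ 1 := by
      rw [Matrix.l2_opNorm_def]
      refine ContinuousLinearMap.opNorm_le_bound _ zero_le_one fun x => ?_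
      rw [one_mul]
      have happ : ((Matrix.toEuclideanLin.trans LinearMap.toContinuousLinearMap) E) x
          = (WithLp.equiv 2 (Fin n → ℂ)).symm (E *ᵥ (WithLp.equiv 2 (Fin n → ℂ)) x) := rfl
      rw [happ]
      set y : Fin n → ℂ := (WithLp.equiv 2 (Fin n → ℂ)) x with hy
      have hmv : E *ᵥ y = fun j => (d j : ℂ) * y (π j) := by
        ext j
        simp only [hE, Matrix.mulVec, dotProduct, submatrix_apply, diagonal_apply, id_eq,
          Equiv.eq_symm_apply (e := π), ite_mul, zero_mul]
        rw [Finset.sum_ite_eq (Finset.univ) (π j) (fun k => (d j : ℂ) * y k)]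
        simp
      rw [hmv]
      have hxn : ‖x‖ = Real.sqrt (∑ j, ‖y j‖ ^ 2) := by
        rw [EuclideanSpace.norm_eq]; rfl
      have hyn : ‖(WithLp.equiv 2 (Fin n → ℂ)).symm (fun j => (d j : ℂ) * y (π j))‖
          = Real.sqrt (∑ j, ‖(d j : ℂ) * y (π j)‖ ^ 2) := by
        rw [EuclideanSpace.norm_eq]; rfl
      rw [hxn, hyn]
      apply Real.sqrt_le_sqrt
      have : ∑ j, ‖y j‖ ^ 2 = ∑ j, ‖y (π j)‖ ^ 2 :=
        (Equiv.sum_comp π (fun j => ‖y j‖ ^ 2)).symm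
      rw [this]
      apply Finset.sum_le_sum
      intro j _
      have : ‖((d j : ℝ) : ℂ)‖ ≤ 1 := by
        rw [Complex.norm_real, Real.norm_eq_abs, abs_of_nonneg (dnn j)]
        exact dle j
      calc ‖(d j : ℂ) * y (π j)‖ ^ 2 = (‖((d j : ℝ) : ℂ)‖ * ‖y (π j)‖) ^ 2 := by
            rw [norm_mul]
        _ ≤ (1 * ‖y (π j)‖) ^ 2 := by
            apply pow_le_pow_left₀ (by positivity)
            exact mul_le_mul_of_nonneg_right this (norm_nonneg _)
        _ = ‖y (π j)‖ ^ 2 := by rw [one_mul]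
    calc ‖(Ua : Matrix (Fin n) (Fin n) ℂ) * E * star (Ub : Matrix (Fin n) (Fin n) ℂ)‖
        ≤ ‖(Ua : Matrix (Fin n) (Fin n) ℂ) * E‖ * ‖star (Ub : Matrix (Fin n) (Fin n) ℂ)‖ :=
          Matrix.l2_opNorm_mul _ _
      _ ≤ (‖(Ua : Matrix (Fin n) (Fin n) ℂ)‖ * ‖E‖) * ‖star (Ub : Matrix (Fin n) (Fin n) ℂ)‖ := by
          apply mul_le_mul_of_nonneg_right (Matrix.l2_opNorm_mul _ _) (norm_nonneg _)
      _ ≤ 1 := by rw [hUa1, hUb1]; simpa using hE1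
  · have hsand :
        E * diagonal (RCLike.ofReal ∘ lb) * Eᴴ = diagonal (RCLike.ofReal ∘ la) := by
      rw [hE, perm_diag_sandwich]
      refine congrArg diagonal (funext fun j => ?_)
      simp only [Equiv.symm_symm, Function.comp_apply]
      exact dsq j
    calc a = (Ua : Matrix (Fin n) (Fin n) ℂ) * diagonal (RCLike.ofReal ∘ la)
            * star (Ua : Matrix (Fin n) (Fin n) ℂ) := ha.1.spectral_theorem
      _ = _ := by
          rw [← hsand, ← (by simpa only [Unitary.conjStarAlgAut_star_apply] using
            hb.1.conjStarAlgAut_star_eigenvectorUnitary :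
            star (Ub : Matrix (Fin n) (Fin n) ℂ) * b * (Ub : Matrix (Fin n) (Fin n) ℂ) = diagonal (RCLike.ofReal ∘ lb))]
          simp only [StarMul.star_mul, star_star, Matrix.star_eq_conjTranspose,
            Matrix.mul_assoc, conjTranspose_conjTranspose]

/-- `λ_i(a) ≤ λ_i(b)` for all `i` iff `a = c b c^*` for some contraction `c`. -/
theorem stmt6 (n : ℕ) (a b : Matrix (Fin n) (Fin n) ℂ) (ha : a.PosSemidef) (hb : b.PosSemidef) :
    (∀ i : Fin n, eigDesc a ha.1 i ≤ eigDesc b hb.1 i) ↔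
      ∃ c : Matrix (Fin n) (Fin n) ℂ,
        ‖Matrix.toEuclideanCLM (𝕜 := ℂ) c‖ ≤ 1 ∧ a = c * b * star c := by
  constructor
  · intro h
    rcases Nat.eq_zero_or_pos n with rfl | hn
    · refine ⟨0, by rw [map_zero, norm_zero]; exact zero_le_one, ?_⟩
      ext i j
      exact i.elim0
    · exact stmt6_fwd n hn a b ha hb h
  · rintro ⟨c, hc, habc⟩ i
    exact stmt6_bwd n a b ha hb c hc habc i
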